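/- Let g ∈ L^n with wt_R(g) = t, and let k be an integer with 1 ≤ k ≤ t ≤ min(n, m). Then the minimum rank distance of the extended Gabidulin code EG_k(g) (the row space over L of Moore(g, k)) equals t − k + 1; that is, every nonzero codeword has rank weight at least t − k + 1, and some nonzero codeword has rank weight exactly t − k + 1. -/
import Mathlib

open Matrix Polynomial Module

/-- Rank weight of a vector over the extension `L` of the base field `K`. -/
noncomputable def rankWeight (K : Type*) {L : Type*} [Field K] [Field L] [Algebra K L]
    {ι : Type*} (v : ι → L) : ℕ :=
  Module.finrank K (Submodule.span K (Set.range v))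

/-- The `k × n` Moore matrix of `g`: entry `(i, j)` is `g j ^ q ^ i`. -/
def moore (q : ℕ) {L : Type*} [Field L] {n : ℕ} (g : Fin n → L) (k : ℕ) :
    Matrix (Fin k) (Fin n) L :=
  Matrix.of fun i j => g j ^ q ^ (i : ℕ)

section Helpers

variable {K L : Type*} [Field K] [Fintype K] [Field L] [Algebra K L]

/-- The linearized polynomial map `z ↦ ∑ x i * z ^ q ^ i` is `K`-linear. -/
lemma exists_qlin {k : ℕ} (x : Fin k → L) :
    ∃ f : L →ₗ[K] L, ∀ z : L, f z = ∑ i, x i * z ^ (Fintype.card K) ^ (i : ℕ) := by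
  obtain ⟨e, hp, hcard⟩ := FiniteField.card K (ringChar K)
  haveI : CharP L (ringChar K) :=
    charP_of_injective_algebraMap (algebraMap K L).injective (ringChar K)
  haveI := Fact.mk hp
  haveI : ExpChar L (ringChar K) := ExpChar.prime hp
  have hpow_add : ∀ (z w : L) (i : ℕ),
      (z + w) ^ (Fintype.card K) ^ i = z ^ (Fintype.card K) ^ i + w ^ (Fintype.card K) ^ i := by
    intro z w i
    rw [hcard, ← pow_mul]
    exact add_pow_char_pow z w _ _
  have hpow_smul : ∀ (a : K) (z : L) (i : ℕ),
      (a • z) ^ (Fintype.card K) ^ i = a • z ^ (Fintype.card K) ^ i := by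
    intro a z i
    rw [Algebra.smul_def, Algebra.smul_def, mul_pow, ← map_pow, FiniteField.pow_card_pow]
  refine ⟨{ toFun := fun z => ∑ i, x i * z ^ (Fintype.card K) ^ (i : ℕ),
            map_add' := ?_, map_smul' := ?_ }, fun z => rfl⟩
  · intro z w
    rw [← Finset.sum_add_distrib]
    exact Finset.sum_congr rfl fun i _ => by rw [hpow_add, mul_add]
  · intro a z
    show (∑ i, x i * (a • z) ^ (Fintype.card K) ^ (i : ℕ)) =
      (RingHom.id K) a • ∑ i, x i * z ^ (Fintype.card K) ^ (i : ℕ)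
    rw [RingHom.id_apply, Finset.smul_sum]
    exact Finset.sum_congr rfl fun i _ => by rw [hpow_smul, mul_smul_comm]

/-- The linearized polynomial associated to coefficients `x`. -/
noncomputable def qpoly (q : ℕ) {k : ℕ} (x : Fin k → L) : L[X] :=
  ∑ i, Polynomial.C (x i) * Polynomial.X ^ (q ^ (i : ℕ))

lemma qpoly_eval (q : ℕ) {k : ℕ} (x : Fin k → L) (z : L) :
    (qpoly q x).eval z = ∑ i, x i * z ^ q ^ (i : ℕ) := by
  simp [qpoly, eval_finset_sum]

lemma qpoly_natDegree_le (q : ℕ) (hq : 1 ≤ q) {k : ℕ} (hk : 1 ≤ k) (x : Fin k → L) :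
    (qpoly q x).natDegree ≤ q ^ (k - 1) := by
  refine natDegree_sum_le_of_forall_le _ _ fun i _ => ?_
  refine (natDegree_C_mul_le _ _).trans ?_
  rw [natDegree_X_pow]
  exact Nat.pow_le_pow_right hq (by omega)

lemma qpoly_ne_zero (q : ℕ) (hq : 2 ≤ q) {k : ℕ} {x : Fin k → L} (hx : x ≠ 0) :
    qpoly q x ≠ 0 := by
  classical
  obtain ⟨j, hj⟩ := Function.ne_iff.mp hx
  intro h
  apply hj
  have := congrArg (fun P => Polynomial.coeff P (q ^ (j : ℕ))) h
  simp only [qpoly, Polynomial.finset_sum_coeff, Polynomial.coeff_C_mul,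
    Polynomial.coeff_X_pow, Polynomial.coeff_zero] at this
  rw [Finset.sum_eq_single j] at this
  · simpa using this
  · intro i _ hij
    have : (q : ℕ) ^ (i : ℕ) ≠ q ^ (j : ℕ) := fun hpow =>
      hij (Fin.val_injective (Nat.pow_right_injective hq hpow))
    simp [Ne.symm this]
  · simp

/-- Kernel dimension bound for a nonzero linearized polynomial of `q`-degree `< k`. -/
lemma finrank_ker_le [FiniteDimensional K L] {k : ℕ} (hk : 1 ≤ k) (x : Fin k → L)
    (f : L →ₗ[K] L) (hf : ∀ z, f z = ∑ i, x i * z ^ (Fintype.card K) ^ (i : ℕ))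
    (hP : qpoly (Fintype.card K) x ≠ 0) :
    finrank K (LinearMap.ker f) ≤ k - 1 := by
  classical
  set q := Fintype.card K with hqdef
  have hq2 : 2 ≤ q := Fintype.one_lt_card
  haveI : Finite L := Module.finite_of_finite K
  haveI : Fintype L := Fintype.ofFinite L
  haveI : Fintype ↥(LinearMap.ker f) := Fintype.ofFinite _
  have hsub : (LinearMap.ker f : Set L) ⊆ ((qpoly q x).roots.toFinset : Set L) := by
    intro z hz
    simp only [Finset.coe_sort_coe, Multiset.mem_toFinset, Finset.mem_coe]
    rw [Polynomial.mem_roots hP]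
    have : f z = 0 := hz
    rw [Polynomial.IsRoot, qpoly_eval, ← hf]
    exact this
  have h1 : Fintype.card ↥(LinearMap.ker f) ≤ q ^ (k - 1) := by
    calc Fintype.card ↥(LinearMap.ker f)
        = Nat.card ↥(LinearMap.ker f) := (Nat.card_eq_fintype_card).symm
      _ = ((LinearMap.ker f : Set L)).ncard := (Nat.card_coe_set_eq _)
      _ ≤ (((qpoly q x).roots.toFinset : Set L)).ncard :=
          Set.ncard_le_ncard hsub (Set.toFinite _)
      _ = (qpoly q x).roots.toFinset.card := by rw [Set.ncard_coe_finset]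
      _ ≤ Multiset.card (qpoly q x).roots := Multiset.toFinset_card_le _
      _ ≤ (qpoly q x).natDegree := Polynomial.card_roots' _
      _ ≤ q ^ (k - 1) := qpoly_natDegree_le q (by omega) hk x
  rw [card_eq_pow_finrank (K := K) (V := ↥(LinearMap.ker f))] at h1
  exact (Nat.pow_le_pow_iff_right (by omega)).mp h1

/-- Rank–nullity for the image of a submodule. -/
lemma finrank_map_add_finrank_inf_ker [FiniteDimensional K L] (f : L →ₗ[K] L)
    (V : Submodule K L) :
    finrank K (V.map f) + finrank K ↥(V ⊓ LinearMap.ker f) = finrank K V := by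
  have h := LinearMap.finrank_range_add_finrank_ker (f.domRestrict V)
  rw [LinearMap.range_domRestrict, LinearMap.ker_domRestrict] at h
  rw [← h]
  congr 1
  rw [← Submodule.finrank_map_subtype_eq V ((LinearMap.ker f).comap V.subtype),
    Submodule.map_comap_subtype]

lemma span_vecMul_moore {n k : ℕ} (g : Fin n → L) (x : Fin k → L) (f : L →ₗ[K] L)
    (hf : ∀ z, f z = ∑ i, x i * z ^ (Fintype.card K) ^ (i : ℕ)) :
    Submodule.span K (Set.range (x ᵥ* moore (Fintype.card K) g k)) =
      (Submodule.span K (Set.range g)).map f := by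
  have hcomp : (x ᵥ* moore (Fintype.card K) g k) = f ∘ g := by
    funext j
    rw [Function.comp_apply, hf]
    simp [Matrix.vecMul, moore, dotProduct]
  rw [hcomp, Set.range_comp, ← Submodule.map_span]

end Helpers

theorem extendedGabidulin_min_rank_distance
    (q m n k t : ℕ)
    (K L : Type*) [Field K] [Fintype K] [Field L] [Algebra K L]
    (hq : Fintype.card K = q) (hm : Module.finrank K L = m)
    (hkpos : 1 ≤ k) (hkt : k ≤ t) (ht : t ≤ min n m)
    (g : Fin n → L) (hg : rankWeight K g = t) :
    (∀ c : Fin n → L,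
      (∃ x : Fin k → L, c = x ᵥ* moore q g k) → c ≠ 0 → t - k + 1 ≤ rankWeight K c) ∧
    ∃ c : Fin n → L,
      (∃ x : Fin k → L, c = x ᵥ* moore q g k) ∧ c ≠ 0 ∧
      rankWeight K c = t - k + 1 := by
  subst hq
  have hq2 : 2 ≤ Fintype.card K := Fintype.one_lt_card
  have hmt : t ≤ m := le_trans ht (min_le_right n m)
  haveI : FiniteDimensional K L := Module.finite_of_finrank_pos (by rw [hm]; omega)
  set V : Submodule K L := Submodule.span K (Set.range g) with hV
  have hVt : finrank K V = t := hg
  constructor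
  · rintro c ⟨x, rfl⟩ hc0
    obtain ⟨f, hf⟩ := exists_qlin (K := K) x
    have hspan := span_vecMul_moore g x f hf
    have hP : qpoly (Fintype.card K) x ≠ 0 := by
      intro h
      apply hc0
      funext j
      have hcj : (x ᵥ* moore (Fintype.card K) g k) j = f (g j) := by
        rw [hf]; simp [Matrix.vecMul, moore, dotProduct]
      rw [Pi.zero_apply, hcj, hf, ← qpoly_eval, h, Polynomial.eval_zero]
    have hker := finrank_ker_le hkpos x f hf hP
    have hrn := finrank_map_add_finrank_inf_ker f V
    rw [hVt] at hrn
    have hmono : finrank K ↥(V ⊓ LinearMap.ker f) ≤ finrank K ↥(LinearMap.ker f) :=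
      Submodule.finrank_mono inf_le_right
    unfold rankWeight
    rw [hspan, ← hV]
    omega
  · have hk1t : k - 1 ≤ finrank K V := by omega
    let b : Basis (Fin (finrank K ↥V)) K V := Module.finBasis K V
    set w : Fin (k - 1) → L := fun j => ((b (Fin.castLE hk1t j) : V) : L) with hw
    have hwV : ∀ j, w j ∈ V := fun j => (b (Fin.castLE hk1t j)).2
    have hwli : LinearIndependent K w := by
      have h1 : LinearIndependent K (fun i : Fin (finrank K ↥V) => ((b i : V) : L)) :=
        b.linearIndependent.map' V.subtype (Submodule.ker_subtype V)
      exact h1.comp (Fin.castLE hk1t) (Fin.castLE_injective hk1t)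
    set M : Matrix (Fin k) (Fin (k - 1)) L :=
      Matrix.of fun i j => (w j) ^ (Fintype.card K) ^ (i : ℕ) with hM
    have hkerM : LinearMap.ker M.vecMulLinear ≠ ⊥ := by
      apply LinearMap.ker_ne_bot_of_finrank_lt
      rw [Module.finrank_pi, Module.finrank_pi, Fintype.card_fin, Fintype.card_fin]
      omega
    obtain ⟨x, hxker, hx0⟩ := Submodule.exists_mem_ne_zero_of_ne_bot hkerM
    obtain ⟨f, hf⟩ := exists_qlin (K := K) x
    have hfw : ∀ j, f (w j) = 0 := by
      intro j
      have hMj := congrFun (LinearMap.mem_ker.mp hxker) j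
      rw [hf]
      simpa [hM, Matrix.vecMulLinear, Matrix.vecMul, dotProduct] using hMj
    have hP : qpoly (Fintype.card K) x ≠ 0 := qpoly_ne_zero _ hq2 hx0
    have hker := finrank_ker_le hkpos x f hf hP
    set W : Submodule K L := Submodule.span K (Set.range w) with hW
    have hWle : W ≤ V ⊓ LinearMap.ker f := by
      rw [Submodule.span_le]
      rintro _ ⟨j, rfl⟩
      exact ⟨hwV j, LinearMap.mem_ker.mpr (hfw j)⟩
    have hWrank : finrank K W = k - 1 := by
      rw [hW, finrank_span_eq_card hwli, Fintype.card_fin]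
    have hinf : finrank K ↥(V ⊓ LinearMap.ker f) = k - 1 := by
      have h1 : finrank K ↥(V ⊓ LinearMap.ker f) ≤ finrank K ↥(LinearMap.ker f) :=
        Submodule.finrank_mono inf_le_right
      have h2 : k - 1 ≤ finrank K ↥(V ⊓ LinearMap.ker f) := by
        rw [← hWrank]; exact Submodule.finrank_mono hWle
      omega
    have hrn := finrank_map_add_finrank_inf_ker f V
    rw [hVt, hinf] at hrn
    have hweight : rankWeight K (x ᵥ* moore (Fintype.card K) g k) = t - k + 1 := by
      unfold rankWeight
      rw [span_vecMul_moore g x f hf, ← hV]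
      omega
    refine ⟨x ᵥ* moore (Fintype.card K) g k, ⟨x, rfl⟩, ?_, hweight⟩
    intro h0
    rw [h0] at hweight
    have hz : rankWeight K (0 : Fin n → L) = 0 := by
      unfold rankWeight
      have hbot : Submodule.span K (Set.range (0 : Fin n → L)) = ⊥ := by
        rw [eq_bot_iff, Submodule.span_le]
        rintro _ ⟨j, rfl⟩; simp
      rw [hbot, finrank_bot]
    omega
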